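/- Define eight plane vectors u₁,…,u₈ with u_{i+4} = −u_i, and let u_{ij} = u_i × u_j. Define the f₁-update v_j = u_{j−1}+u_j+u_{j+1} for j ≡ 1 (mod 4) and v_j = u_j otherwise (indices mod 8), and the g-update v_i = −(u_{i−1}+u_i+u_{i+1}) for all i. If u_{ij} > 0 for all 1 ≤ i < j ≤ 4, then the updated vectors v₁,…,v₄ also satisfy v_i × v_j > 0 for all 1 ≤ i < j ≤ 4, in both the f₁ and the g cases. -/
import Mathlib


/-- Cross product of plane vectors. -/
def cross (u v : ℝ × ℝ) : ℝ := u.1 * v.2 - u.2 * v.1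

/-- The `f₁`-update on an octuple of vectors: `v_j = u_{j-1} + u_j + u_{j+1}` for
`j ≡ 1 (mod 4)` and `v_j = u_j` otherwise. -/
def f1upd (u : ZMod 8 → ℝ × ℝ) : ZMod 8 → ℝ × ℝ :=
  fun j => if j = 1 ∨ j = 5 then u (j - 1) + u j + u (j + 1) else u j

/-- The `g`-update on an octuple of vectors: `v_i = -(u_{i-1} + u_i + u_{i+1})`. -/
def gupd (u : ZMod 8 → ℝ × ℝ) : ZMod 8 → ℝ × ℝ :=
  fun i => -(u (i - 1) + u i + u (i + 1))

set_option maxHeartbeats 1000000 in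
theorem stmt9 (u : ZMod 8 → ℝ × ℝ) (hsym : ∀ i : ZMod 8, u (i + 4) = -u i)
    (hpos : ∀ i j : ℕ, 1 ≤ i → i < j → j ≤ 4 → 0 < cross (u i) (u j)) :
    (∀ i j : ℕ, 1 ≤ i → i < j → j ≤ 4 →
      0 < cross (f1upd u i) (f1upd u j)) ∧
    (∀ i j : ℕ, 1 ≤ i → i < j → j ≤ 4 →
      0 < cross (gupd u i) (gupd u j)) := by
  have h0 : u 0 = -u 4 := by
    have := hsym 4; rwa [show (4:ZMod 8)+4 = 0 from by decide] at this
  have h5 : u 5 = -u 1 := by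
    have := hsym 1; rwa [show (1:ZMod 8)+4 = 5 from by decide] at this
  have p12 := hpos 1 2 (by norm_num) (by norm_num) (by norm_num)
  have p13 := hpos 1 3 (by norm_num) (by norm_num) (by norm_num)
  have p14 := hpos 1 4 (by norm_num) (by norm_num) (by norm_num)
  have p23 := hpos 2 3 (by norm_num) (by norm_num) (by norm_num)
  have p24 := hpos 2 4 (by norm_num) (by norm_num) (by norm_num)
  have p34 := hpos 3 4 (by norm_num) (by norm_num) (by norm_num)
  push_cast at p12 p13 p14 p23 p24 p34
  simp only [cross] at p12 p13 p14 p23 p24 p34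
  constructor <;>
  · intro i j hi hij hj
    have hi3 : i ≤ 3 := by omega
    interval_cases i <;> interval_cases j <;>
    · push_cast
      simp only [f1upd, gupd]
      norm_num [show (2:ZMod 8) ≠ 1 from by decide, show (2:ZMod 8) ≠ 5 from by decide,
        show (3:ZMod 8) ≠ 1 from by decide, show (3:ZMod 8) ≠ 5 from by decide,
        show (4:ZMod 8) ≠ 1 from by decide, show (4:ZMod 8) ≠ 5 from by decide]
      simp only [h0, h5, cross, Prod.fst_add, Prod.snd_add, Prod.fst_neg, Prod.snd_neg] <;>
      linarith [p12, p13, p14, p23, p24, p34]
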